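/- arXiv:1412.4237 — 3 statements merged into one kernel-verified Lean document; each statement's English description precedes it below -/
import Mathlib

section
/- Opial's theorem in ℝ^d: if T : ℝ^d → ℝ^d is nonexpansive, asymptotically regular (T^{r+1}x − T^r x → 0 for all x), and Fix(T) ≠ ∅, then for every x⁰ the Picard sequence x^{r+1} = T x^r converges to a fixed point of T. -/
open Filter Topology

/-- Opial's convergence theorem in `ℝ^d`: if `T` is nonexpansive,
asymptotically regular and has a fixed point, then every Picard sequence converges to
a fixed point of `T`. -/
theorem opial_convergence {d : ℕ}
    (T : EuclideanSpace ℝ (Fin d) → EuclideanSpace ℝ (Fin d))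
    (hne : ∀ x y, ‖T x - T y‖ ≤ ‖x - y‖)
    (har : ∀ x : EuclideanSpace ℝ (Fin d),
      Tendsto (fun r : ℕ => T^[r + 1] x - T^[r] x) atTop (𝓝 0))
    (hfix : ∃ x, T x = x) :
    ∀ x0 : EuclideanSpace ℝ (Fin d),
      ∃ z, T z = z ∧ Tendsto (fun r : ℕ => T^[r] x0) atTop (𝓝 z) := by
  intro x0
  set f : ℕ → EuclideanSpace ℝ (Fin d) := fun r => T^[r] x0 with hf
  have hTcont : Continuous T := by
    have : LipschitzWith 1 T :=
      LipschitzWith.of_dist_le_mul fun x y => by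
        simpa [dist_eq_norm] using hne x y
    exact this.continuous
  -- distance to any fixed point is nonincreasing
  have key : ∀ p, T p = p → ∀ r, ‖f (r + 1) - p‖ ≤ ‖f r - p‖ := by
    intro p hp r
    have : f (r + 1) = T (f r) := Function.iterate_succ_apply' T r x0
    calc ‖f (r + 1) - p‖ = ‖T (f r) - T p‖ := by rw [this, hp]
      _ ≤ ‖f r - p‖ := hne _ _
  have anti : ∀ p, T p = p → Antitone fun r => ‖f r - p‖ := by
    intro p hp
    exact antitone_nat_of_succ_le (key p hp)
  obtain ⟨p, hp⟩ := hfix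
  -- boundedness
  have hbdd : ∀ r, f r ∈ Metric.closedBall p ‖f 0 - p‖ := by
    intro r
    simp only [Metric.mem_closedBall, dist_eq_norm]
    exact (anti p hp) (Nat.zero_le r)
  obtain ⟨z, _, φ, hφ, hfz⟩ :=
    tendsto_subseq_of_bounded Metric.isBounded_closedBall hbdd
  -- z is a fixed point
  have hzfix : T z = z := by
    have h1 : Tendsto (fun k => T (f (φ k))) atTop (𝓝 (T z)) :=
      (hTcont.tendsto z).comp hfz
    have h2 : Tendsto (fun k => T (f (φ k)) - f (φ k)) atTop (𝓝 0) := by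
      have := (har x0).comp hφ.tendsto_atTop
      simpa [hf, Function.comp_def, Function.iterate_succ_apply'] using this
    have h3 : Tendsto (fun k => T (f (φ k))) atTop (𝓝 z) := by
      have := h2.add hfz
      simpa using this
    exact tendsto_nhds_unique h1 h3
  refine ⟨z, hzfix, ?_⟩
  -- ‖f r - z‖ is antitone with a subsequence tending to 0, hence tends to 0
  have hsub0 : Tendsto (fun k => ‖f (φ k) - z‖) atTop (𝓝 0) := by
    have := hfz.sub (tendsto_const_nhds (x := z))
    simpa using (this.norm)
  have hlim : Tendsto (fun r => ‖f r - z‖) atTop (𝓝 (⨅ r, ‖f r - z‖)) :=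
    tendsto_atTop_ciInf (anti z hzfix) ⟨0, fun y ⟨r, hr⟩ => hr ▸ norm_nonneg _⟩
  have hsub : Tendsto (fun k => ‖f (φ k) - z‖) atTop (𝓝 (⨅ r, ‖f r - z‖)) :=
    hlim.comp hφ.tendsto_atTop
  have : (⨅ r, ‖f r - z‖) = 0 := tendsto_nhds_unique hsub hsub0
  rw [this] at hlim
  rwa [tendsto_iff_norm_sub_tendsto_zero]
end

section
/- Let g : ℝ^d → ℝ be convex and differentiable with L-Lipschitz gradient, h ∈ Γ₀(ℝ^d), and suppose argmin(g+h) ≠ ∅. Then for any η ∈ (0, 2/L) and any x⁰, the proximal gradient iteration x^{r+1} = prox_{ηh}(x^r − η∇g(x^r)) converges to a minimizer of g + h. -/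
noncomputable section

/-- Euclidean space `ℝ^d`. -/
abbrev Euc (d : ℕ) := EuclideanSpace ℝ (Fin d)

/-- `f` is proper: it never takes the value `⊥` and is not identically `+∞`. -/
def ProperF {d : ℕ} (f : Euc d → EReal) : Prop :=
  (∀ x, f x ≠ ⊥) ∧ ∃ x, f x ≠ ⊤

/-- Convexity for extended-real-valued functions on `ℝ^d`. -/
def ConvexF {d : ℕ} (f : Euc d → EReal) : Prop :=
  ∀ x y : Euc d, ∀ t : ℝ, 0 ≤ t → t ≤ 1 →
    f (t • x + (1 - t) • y) ≤ (t : EReal) * f x + ((1 - t : ℝ) : EReal) * f y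

/-- `f ∈ Γ₀(ℝ^d)`: proper, convex and lower semicontinuous. -/
def Gamma0 {d : ℕ} (f : Euc d → EReal) : Prop :=
  ProperF f ∧ ConvexF f ∧ LowerSemicontinuous f

/-- The objective `y ↦ (1/(2λ))‖x - y‖² + f(y)` defining the proximal operator. -/
def proxObj {d : ℕ} (f : Euc d → EReal) (lam : ℝ) (x y : Euc d) : EReal :=
  (((1 / (2 * lam)) * ‖x - y‖ ^ 2 : ℝ) : EReal) + f y

open Filter Topology

open InnerProductSpace
open scoped RealInnerProductSpace

lemma pgLineDeriv {d : ℕ} {g : Euc d → ℝ} {g' : Euc d → Euc d}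
    (hgrad : ∀ x, HasGradientAt g (g' x) x) (x v : Euc d) (t : ℝ) :
    HasDerivAt (fun s : ℝ => g (x + s • v)) ⟪g' (x + t • v), v⟫ t := by
  have hc : HasDerivAt (fun s : ℝ => x + s • v) v t := by
    simpa using ((hasDerivAt_id t).smul_const v).const_add x
  have hg' : HasFDerivAt g ((toDual ℝ (Euc d)) (g' (x + t • v))) (x + t • v) :=
    (hgrad _).hasFDerivAt
  simpa [Function.comp_def] using hg'.comp_hasDerivAt t hc

lemma descent {d : ℕ} {g : Euc d → ℝ} {g' : Euc d → Euc d} {L : ℝ}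
    (hgrad : ∀ x, HasGradientAt g (g' x) x)
    (hLip : ∀ x y, ‖g' x - g' y‖ ≤ L * ‖x - y‖) (x y : Euc d) :
    g y ≤ g x + ⟪g' x, y - x⟫ + L / 2 * ‖y - x‖ ^ 2 := by
  set v := y - x with hv
  set χ : ℝ → ℝ := fun t => g (x + t • v) - g x - t * ⟪g' x, v⟫ - L * ‖v‖ ^ 2 / 2 * t ^ 2
    with hχ
  have hd : ∀ t : ℝ, HasDerivAt χ (⟪g' (x + t • v), v⟫ - ⟪g' x, v⟫ - L * ‖v‖ ^ 2 * t) t := by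
    intro t
    have h1 := pgLineDeriv hgrad x v t
    have ha : HasDerivAt (fun s : ℝ => s * ⟪g' x, v⟫) ⟪g' x, v⟫ t := by
      simpa using (hasDerivAt_id t).mul_const ⟪g' x, v⟫
    have hb : HasDerivAt (fun s : ℝ => L * ‖v‖ ^ 2 / 2 * s ^ 2) (L * ‖v‖ ^ 2 * t) t := by
      have := (hasDerivAt_pow 2 t).const_mul (L * ‖v‖ ^ 2 / 2)
      refine this.congr_deriv ?_
      norm_num
      ring
    have := ((h1.sub_const (g x)).sub ha).sub hb
    exact this
  have hder0 : ∀ t ∈ Set.Ioo (0:ℝ) 1, deriv χ t ≤ 0 := by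
    intro t ht
    rw [(hd t).deriv]
    have h2 : ‖g' (x + t • v) - g' x‖ ≤ L * (t * ‖v‖) := by
      have := hLip (x + t • v) x
      simpa [norm_smul, abs_of_pos ht.1, mul_assoc] using this
    have h3 : ⟪g' (x + t • v) - g' x, v⟫ ≤ L * (t * ‖v‖) * ‖v‖ :=
      (real_inner_le_norm _ _).trans (mul_le_mul_of_nonneg_right h2 (norm_nonneg v))
    rw [inner_sub_left] at h3
    nlinarith [h3]
  have hanti : AntitoneOn χ (Set.Icc (0:ℝ) 1) := by
    apply antitoneOn_of_deriv_nonpos (convex_Icc 0 1)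
    · exact fun t _ => ((hd t).differentiableAt.continuousAt).continuousWithinAt
    · exact fun t _ => (hd t).differentiableAt.differentiableWithinAt
    · intro t ht
      exact hder0 t (by simpa [interior_Icc] using ht)
  have h01 : χ 1 ≤ χ 0 := hanti (by norm_num) (by norm_num) (by norm_num)
  have e0 : χ 0 = 0 := by simp [hχ]
  have e1 : χ 1 = g y - g x - ⟪g' x, v⟫ - L * ‖v‖ ^ 2 / 2 := by
    simp [hχ, hv]
  rw [e0, e1] at h01
  nlinarith [h01]

lemma convex_lb {d : ℕ} {g : Euc d → ℝ} {g' : Euc d → Euc d}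
    (hgconv : ConvexOn ℝ Set.univ g)
    (hgrad : ∀ x, HasGradientAt g (g' x) x) (x y : Euc d) :
    g x + ⟪g' x, y - x⟫ ≤ g y := by
  set v := y - x with hv
  set ψ : ℝ → ℝ := fun t => g (x + t • v) with hψ
  have hD : HasDerivAt ψ ⟪g' x, v⟫ 0 := by
    have := pgLineDeriv hgrad x v 0
    simpa using this
  have hslope : Tendsto (slope ψ 0) (𝓝[>] 0) (𝓝 ⟪g' x, v⟫) :=
    (hasDerivAt_iff_tendsto_slope.1 hD).mono_left
      (nhdsWithin_mono _ (fun t ht => ne_of_gt ht))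
  have hbound : ∀ᶠ t in 𝓝[>] (0:ℝ), slope ψ 0 t ≤ g y - g x := by
    filter_upwards [Ioc_mem_nhdsGT_of_mem (Set.left_mem_Ico.2 one_pos)] with t ht
    have hconv := hgconv.2 (Set.mem_univ x) (Set.mem_univ y)
      (show (0:ℝ) ≤ 1 - t by linarith [ht.2]) ht.1.le
      (show (1 - t) + t = (1:ℝ) by ring)
    have hxt : (1 - t) • x + t • y = x + t • v := by
      rw [hv]; module
    rw [hxt] at hconv
    rw [slope_def_field]
    have : ψ t ≤ (1 - t) * g x + t * g y := hconv
    have h0 : ψ 0 = g x := by simp [hψ]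
    rw [sub_zero, div_le_iff₀ ht.1, h0]
    nlinarith [this]
  have := le_of_tendsto hslope hbound
  linarith [this]

lemma half_coco {d : ℕ} {g : Euc d → ℝ} {g' : Euc d → Euc d} {L : ℝ} (hL : 0 < L)
    (hgconv : ConvexOn ℝ Set.univ g)
    (hgrad : ∀ x, HasGradientAt g (g' x) x)
    (hLip : ∀ x y, ‖g' x - g' y‖ ≤ L * ‖x - y‖) (x y : Euc d) :
    g x + ⟪g' x, y - x⟫ + 1 / (2 * L) * ‖g' y - g' x‖ ^ 2 ≤ g y := by
  set w := y - (1 / L) • (g' y - g' x) with hw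
  have hA : g x + ⟪g' x, w - x⟫ ≤ g w := convex_lb hgconv hgrad x w
  have hB : g w ≤ g y + ⟪g' y, w - y⟫ + L / 2 * ‖w - y‖ ^ 2 := descent hgrad hLip y w
  have hwy : w - y = -((1 / L) • (g' y - g' x)) := by rw [hw]; abel
  have e1 : ⟪g' y, w - y⟫ = -(1 / L) * ⟪g' y, g' y - g' x⟫ := by
    rw [hwy, inner_neg_right, real_inner_smul_right]; ring
  have e2 : ‖w - y‖ ^ 2 = (1 / L) ^ 2 * ‖g' y - g' x‖ ^ 2 := by
    rw [hwy, norm_neg, norm_smul]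
    rw [Real.norm_eq_abs, abs_of_pos (by positivity : (0:ℝ) < 1 / L)]
    ring
  have e3 : ⟪g' x, w - x⟫ = ⟪g' x, y - x⟫ - (1 / L) * ⟪g' x, g' y - g' x⟫ := by
    have : w - x = (y - x) - (1 / L) • (g' y - g' x) := by rw [hw]; abel
    rw [this, inner_sub_right, real_inner_smul_right]
  have e4 : ⟪g' y, g' y - g' x⟫ - ⟪g' x, g' y - g' x⟫ = ‖g' y - g' x‖ ^ 2 := by
    rw [← inner_sub_left, real_inner_self_eq_norm_sq]
  have hL' : (0:ℝ) < 1 / L := by positivity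
  rw [e1, e2] at hB
  rw [e3] at hA
  have key : g x + ⟪g' x, y - x⟫ + (1/L) * ‖g' y - g' x‖ ^ 2 - L/2 * (1/L)^2 * ‖g' y - g' x‖ ^ 2 ≤ g y := by
    nlinarith [hA, hB, e4]
  have e5 : (1/L) * ‖g' y - g' x‖ ^ 2 - L/2 * (1/L)^2 * ‖g' y - g' x‖ ^ 2
      = 1/(2*L) * ‖g' y - g' x‖ ^ 2 := by field_simp; ring
  linarith [key, e5]

lemma cocoercive {d : ℕ} {g : Euc d → ℝ} {g' : Euc d → Euc d} {L : ℝ} (hL : 0 < L)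
    (hgconv : ConvexOn ℝ Set.univ g)
    (hgrad : ∀ x, HasGradientAt g (g' x) x)
    (hLip : ∀ x y, ‖g' x - g' y‖ ≤ L * ‖x - y‖) (x y : Euc d) :
    (1 / L) * ‖g' x - g' y‖ ^ 2 ≤ ⟪g' x - g' y, x - y⟫ := by
  have h1 := half_coco hL hgconv hgrad hLip x y
  have h2 := half_coco hL hgconv hgrad hLip y x
  have e1 : ‖g' y - g' x‖ = ‖g' x - g' y‖ := norm_sub_rev _ _
  have e2 : ⟪g' x - g' y, x - y⟫ = - (⟪g' x, y - x⟫ + ⟪g' y, x - y⟫) := by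
    rw [inner_sub_left]
    have a1 : ⟪g' x, x - y⟫ = - ⟪g' x, y - x⟫ := by
      rw [← inner_neg_right]; congr 1; abel
    have a2 : ⟪g' y, x - y⟫ = ⟪g' y, x - y⟫ := rfl
    rw [a1]; ring
  rw [e1] at h1
  rw [e2]
  have hhN : 1/(2*L) * ‖g' x - g' y‖^2 + 1/(2*L) * ‖g' x - g' y‖^2
      = 1/L * ‖g' x - g' y‖^2 := by field_simp; ring
  linarith [h1, h2, hhN]

lemma le_of_small {A B C : ℝ} (H : ∀ t : ℝ, 0 < t → t ≤ 1 → A ≤ B + t * C) : A ≤ B := by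
  have htend : Tendsto (fun t : ℝ => B + t * C) (𝓝[>] 0) (𝓝 B) := by
    have : ContinuousAt (fun t : ℝ => B + t * C) 0 := by fun_prop
    have h2 : Tendsto (fun t : ℝ => B + t * C) (𝓝[>] 0) (𝓝 (B + 0 * C)) :=
      this.tendsto.mono_left nhdsWithin_le_nhds
    simpa using h2
  refine ge_of_tendsto htend ?_
  filter_upwards [Ioc_mem_nhdsGT_of_mem (Set.left_mem_Ico.2 one_pos)] with t ht
  exact H t ht.1 ht.2

lemma prox_VI {d : ℕ} {h : Euc d → EReal} (hbot : ∀ z, h z ≠ ⊥) (hconv : ConvexF h)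
    {eta : ℝ} (heta0 : 0 < eta) {u p : Euc d} (hptop : h p ≠ ⊤)
    (hm : ∀ y, proxObj h eta u p ≤ proxObj h eta u y)
    {w : Euc d} (hwtop : h w ≠ ⊤) :
    ⟪u - p, w - p⟫ ≤ eta * ((h w).toReal - (h p).toReal) := by
  set A := (h p).toReal with hA
  set B := (h w).toReal with hB
  have hpc : h p = (A : EReal) := (EReal.coe_toReal hptop (hbot p)).symm
  have hwc : h w = (B : EReal) := (EReal.coe_toReal hwtop (hbot w)).symm
  set I := ⟪u - p, w - p⟫ with hI
  set N := ‖w - p‖ ^ 2 with hN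
  refine le_of_small (C := N / 2) ?_
  intro t ht0 ht1
  have hyt : t • w + (1 - t) • p = p + t • (w - p) := by module
  have hcv := hconv w p t (le_of_lt ht0) ht1
  rw [hyt, hpc, hwc] at hcv
  have hcv2 : h (p + t • (w - p)) ≤ ((t * B + (1 - t) * A : ℝ) : EReal) := by
    calc h (p + t • (w - p)) ≤ (t : EReal) * (B:EReal) + ((1 - t : ℝ) : EReal) * (A:EReal) := hcv
      _ = ((t * B + (1 - t) * A : ℝ) : EReal) := by norm_cast
  have hit := hm (p + t • (w - p))
  unfold proxObj at hit
  rw [hpc] at hit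
  have hsub : u - (p + t • (w - p)) = (u - p) - t • (w - p) := by abel
  rw [hsub] at hit
  have hexp : ‖(u - p) - t • (w - p)‖ ^ 2 = ‖u - p‖^2 - 2 * (t * I) + t^2 * N := by
    rw [norm_sub_sq_real, real_inner_smul_right, norm_smul, Real.norm_eq_abs,
      abs_of_pos ht0]
    rw [hI, hN]; ring
  rw [hexp] at hit
  have hR : (1 / (2 * eta)) * ‖u - p‖ ^ 2 + A ≤
      (1 / (2 * eta)) * (‖u - p‖^2 - 2 * (t * I) + t^2 * N) + (t * B + (1 - t) * A) := by
    have := hit.trans (add_le_add_right hcv2 _)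
    have h2 : (((1 / (2 * eta)) * ‖u - p‖ ^ 2 : ℝ) : EReal) + ((A:ℝ) : EReal)
        ≤ (((1 / (2 * eta)) * (‖u - p‖^2 - 2 * (t * I) + t^2 * N) + (t * B + (1 - t) * A) : ℝ) : EReal) := by
      calc (((1 / (2 * eta)) * ‖u - p‖ ^ 2 : ℝ) : EReal) + ((A:ℝ) : EReal)
          ≤ (((1 / (2 * eta)) * (‖u - p‖^2 - 2 * (t * I) + t^2 * N) : ℝ) : EReal)
            + ((t * B + (1 - t) * A : ℝ) : EReal) := this
        _ = _ := by norm_cast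
    have h3 : ((1 / (2 * eta)) * ‖u - p‖ ^ 2 + A : ℝ) ≤
        ((1 / (2 * eta)) * (‖u - p‖^2 - 2 * (t * I) + t^2 * N) + (t * B + (1 - t) * A) : ℝ) := by
      exact_mod_cast h2
    linarith [h3]
  have hR2 := mul_le_mul_of_nonneg_left hR (le_of_lt (by positivity : (0:ℝ) < 2 * eta))
  have hne : (2 * eta) ≠ 0 := by positivity
  field_simp at hR2
  nlinarith [hR2, ht0, heta0, mul_pos ht0 heta0]

lemma coe_add_ne_top {a : ℝ} {b : EReal} (hb : b ≠ ⊤) : ((a : ℝ) : EReal) + b ≠ ⊤ := by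
  induction b using EReal.rec with
  | bot => simp
  | coe b =>
      rw [← EReal.coe_add]
      exact EReal.coe_ne_top _
  | top => exact absurd rfl hb

lemma min_VI {d : ℕ} {g : Euc d → ℝ} {g' : Euc d → Euc d} {L : ℝ}
    (hgrad : ∀ x, HasGradientAt g (g' x) x)
    (hLip : ∀ x y, ‖g' x - g' y‖ ≤ L * ‖x - y‖)
    {h : Euc d → EReal} (hbot : ∀ z, h z ≠ ⊥) (hconv : ConvexF h)
    {q : Euc d} (hqtop : h q ≠ ⊤)
    (hq : ∀ y, ((g q : ℝ) : EReal) + h q ≤ ((g y : ℝ) : EReal) + h y)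
    {w : Euc d} (hwtop : h w ≠ ⊤) :
    0 ≤ ⟪g' q, w - q⟫ + ((h w).toReal - (h q).toReal) := by
  set A := (h q).toReal with hA
  set B := (h w).toReal with hB
  have hqc : h q = (A : EReal) := (EReal.coe_toReal hqtop (hbot q)).symm
  have hwc : h w = (B : EReal) := (EReal.coe_toReal hwtop (hbot w)).symm
  have key : ∀ t : ℝ, 0 < t → t ≤ 1 →
      (0:ℝ) ≤ ⟪g' q, w - q⟫ + (B - A) + t * (L / 2 * ‖w - q‖^2) := by
    intro t ht0 ht1
    have hyt : t • w + (1 - t) • q = q + t • (w - q) := by module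
    have hcv := hconv w q t (le_of_lt ht0) ht1
    rw [hyt, hqc, hwc] at hcv
    have hcv2 : h (q + t • (w - q)) ≤ ((t * B + (1 - t) * A : ℝ) : EReal) := by
      calc h (q + t • (w - q)) ≤ (t : EReal) * (B:EReal) + ((1 - t : ℝ) : EReal) * (A:EReal) := hcv
        _ = _ := by norm_cast
    have hmin := hq (q + t • (w - q))
    rw [hqc] at hmin
    have hle := hmin.trans (add_le_add_right hcv2 _)
    have hre : (g q + A : ℝ) ≤ (g (q + t • (w - q)) + (t * B + (1 - t) * A) : ℝ) := by
      exact_mod_cast hle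
    have hdesc := descent hgrad hLip q (q + t • (w - q))
    have hsub : q + t • (w - q) - q = t • (w - q) := by abel
    rw [hsub] at hdesc
    have e1 : ⟪g' q, t • (w - q)⟫ = t * ⟪g' q, w - q⟫ := real_inner_smul_right _ _ _
    have e2 : ‖t • (w - q)‖^2 = t^2 * ‖w - q‖^2 := by
      rw [norm_smul, Real.norm_eq_abs, abs_of_pos ht0]; ring
    rw [e1, e2] at hdesc
    nlinarith [hre, hdesc, ht0]
  have := le_of_small (A := (0:ℝ)) (B := ⟪g' q, w - q⟫ + (B - A)) (C := L / 2 * ‖w - q‖^2) key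
  linarith [this]

lemma master {d : ℕ} {g : Euc d → ℝ} {g' : Euc d → Euc d} {L : ℝ} (hL : 0 < L)
    (hgconv : ConvexOn ℝ Set.univ g)
    (hgrad : ∀ x, HasGradientAt g (g' x) x)
    (hLip : ∀ x y, ‖g' x - g' y‖ ≤ L * ‖x - y‖)
    {h : Euc d → EReal} (hbot : ∀ z, h z ≠ ⊥) (hconv : ConvexF h)
    {eta : ℝ} (heta0 : 0 < eta)
    {q : Euc d} (hqtop : h q ≠ ⊤)
    (hq : ∀ y, ((g q : ℝ) : EReal) + h q ≤ ((g y : ℝ) : EReal) + h y)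
    {p xr : Euc d} (hptop : h p ≠ ⊤)
    (hprox : ∀ y, proxObj h eta (xr - eta • g' xr) p ≤ proxObj h eta (xr - eta • g' xr) y) :
    ‖p - q‖^2 + ‖p - xr + eta • (g' xr - g' q)‖^2
      + (2 * eta * (1/L) - eta^2) * ‖g' xr - g' q‖^2 ≤ ‖xr - q‖^2 := by
  set u := xr - eta • g' xr with hu
  set v := q - eta • g' q with hv
  set D := p - q with hD
  set U := u - v with hU
  set Δ := g' xr - g' q with hΔ
  -- h1 : firm nonexpansiveness from prox_VI
  have h1 : ⟪u - p, q - p⟫ ≤ eta * ((h q).toReal - (h p).toReal) :=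
    prox_VI hbot hconv heta0 hptop hprox hqtop
  have h2' : 0 ≤ ⟪g' q, p - q⟫ + ((h p).toReal - (h q).toReal) :=
    min_VI hgrad hLip hbot hconv hqtop hq hptop
  have h2 : ⟪v - q, p - q⟫ ≤ eta * ((h p).toReal - (h q).toReal) := by
    have e : v - q = -(eta • g' q) := by rw [hv]; abel
    rw [e, inner_neg_left, real_inner_smul_left]
    nlinarith [h2', heta0]
  -- combine: ‖D‖² ≤ ⟪U, D⟫
  have hDU : ‖D‖^2 ≤ ⟪U, D⟫ := by
    have e1 : ⟪u - p, q - p⟫ = -⟪u - p, D⟫ := by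
      rw [← inner_neg_right]; congr 1; rw [hD]; abel
    have e2 : ⟪v - q, p - q⟫ = ⟪v - q, D⟫ := rfl
    have hsum : ⟪v - q, D⟫ - ⟪u - p, D⟫ ≤ 0 := by
      rw [← e2]
      have := add_le_add h1 h2
      rw [e1] at this
      linarith [this]
    have e3 : ⟪v - q, D⟫ - ⟪u - p, D⟫ = ⟪D - U, D⟫ := by
      rw [← inner_sub_left]; congr 1; rw [hD, hU, hu, hv]; abel
    rw [e3] at hsum
    rw [inner_sub_left, real_inner_self_eq_norm_sq] at hsum
    linarith [hsum]
  -- ‖D‖² + ‖D − U‖² ≤ ‖U‖²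
  have hDU2 : ‖D‖^2 + ‖D - U‖^2 ≤ ‖U‖^2 := by
    have := norm_sub_sq_real D U
    nlinarith [this, hDU, real_inner_comm D U]
  -- ‖U‖² ≤ ‖xr − q‖² − (2η/L − η²)‖Δ‖²
  have hUx : U = (xr - q) - eta • Δ := by rw [hU, hu, hv, hΔ]; module
  have hUb : ‖U‖^2 ≤ ‖xr - q‖^2 - (2 * eta * (1/L) - eta^2) * ‖Δ‖^2 := by
    rw [hUx, norm_sub_sq_real, real_inner_smul_right, norm_smul, Real.norm_eq_abs,
      abs_of_pos heta0]
    have hco : (1 / L) * ‖Δ‖ ^ 2 ≤ ⟪Δ, xr - q⟫ := by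
      rw [hΔ]
      have := cocoercive hL hgconv hgrad hLip xr q
      convert this using 3 <;> abel
    nlinarith [hco, heta0, real_inner_comm Δ (xr - q),
      mul_le_mul_of_nonneg_left hco (le_of_lt heta0)]
  have hDUe : D - U = p - xr + eta • Δ := by rw [hD, hUx]; abel
  rw [hDUe] at hDU2
  linarith [hDU2, hUb]

lemma sq_norm_tendsto {d : ℕ} {w : ℕ → Euc d}
    (H : Tendsto (fun n => ‖w n‖^2) atTop (𝓝 0)) : Tendsto w atTop (𝓝 0) := by
  rw [tendsto_zero_iff_norm_tendsto_zero]
  have h1 : Tendsto (fun n => Real.sqrt (‖w n‖^2)) atTop (𝓝 (Real.sqrt 0)) :=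
    (Real.continuous_sqrt.tendsto 0).comp H
  simpa [Real.sqrt_sq (norm_nonneg _)] using h1

lemma ne_top_of_coe_add_le {c : ℝ} {b e : EReal} (hle : ((c:ℝ):EReal) + b ≤ e)
    (he : e ≠ ⊤) : b ≠ ⊤ := by
  intro hb
  rw [hb, EReal.add_top_of_ne_bot (EReal.coe_ne_bot _)] at hle
  exact he (top_le_iff.1 hle)


/-- convergence of the proximal gradient (forward-backward splitting)
algorithm for `g + h`, with `g` convex and `L`-Lipschitz differentiable,
`h ∈ Γ₀(ℝ^d)` and step size `η ∈ (0, 2/L)`. -/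
theorem proximal_gradient_converges {d : ℕ}
    (g : Euc d → ℝ) (g' : Euc d → Euc d) (L : ℝ) (hL0 : 0 ≤ L)
    (hgconv : ConvexOn ℝ Set.univ g)
    (hgrad : ∀ x, HasGradientAt g (g' x) x)
    (hLip : ∀ x y, ‖g' x - g' y‖ ≤ L * ‖x - y‖)
    (h : Euc d → EReal) (hh : Gamma0 h)
    (hmin : ∃ m : Euc d, ∀ y, ((g m : ℝ) : EReal) + h m ≤ ((g y : ℝ) : EReal) + h y)
    (eta : ℝ) (heta0 : 0 < eta) (heta2 : eta < 2 / L)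
    (x : ℕ → Euc d)
    (hiter : ∀ r : ℕ, ∀ y : Euc d,
      proxObj h eta (x r - eta • g' (x r)) (x (r + 1)) ≤
        proxObj h eta (x r - eta • g' (x r)) y) :
    ∃ m : Euc d, (∀ y, ((g m : ℝ) : EReal) + h m ≤ ((g y : ℝ) : EReal) + h y) ∧
      Tendsto x atTop (𝓝 m) := by

  obtain ⟨m, hm⟩ := hmin
  obtain ⟨⟨hbot, x₀, hx0top⟩, hconv, hlsc⟩ := hh
  have hL : 0 < L := by
    rcases lt_or_eq_of_le hL0 with hL | hL
    · exact hL
    · rw [← hL, div_zero] at heta2; linarith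
  set c : ℝ := 2 * eta * (1/L) - eta^2 with hc
  have hcpos : 0 < c := by
    rw [hc]
    have : eta * eta < eta * (2/L) := by
      exact mul_lt_mul_of_pos_left heta2 heta0
    have h2 : eta * (2/L) = 2 * eta * (1/L) := by ring
    nlinarith [this]
  have hmtop : h m ≠ ⊤ := by
    refine ne_top_of_coe_add_le (hm x₀) (coe_add_ne_top hx0top)
  have hxtop : ∀ r, h (x (r+1)) ≠ ⊤ := by
    intro r
    have hit := hiter r m
    unfold proxObj at hit
    exact ne_top_of_coe_add_le hit (coe_add_ne_top hmtop)
  -- master inequality specialized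
  have M : ∀ (q : Euc d), h q ≠ ⊤ →
      (∀ y, ((g q : ℝ) : EReal) + h q ≤ ((g y : ℝ) : EReal) + h y) → ∀ r : ℕ,
      ‖x (r+1) - q‖^2 + ‖x (r+1) - x r + eta • (g' (x r) - g' q)‖^2
        + c * ‖g' (x r) - g' q‖^2 ≤ ‖x r - q‖^2 := by
    intro q hqtop hq r
    exact master hL hgconv hgrad hLip hbot hconv heta0 hqtop hq (hxtop r) (hiter r)
  -- Fejér monotonicity wrt m
  set a : ℕ → ℝ := fun r => ‖x r - m‖^2 with ha
  have ha_anti : Antitone a := by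
    refine antitone_nat_of_succ_le ?_
    intro r
    have := M m hmtop hm r
    simp only [ha]
    nlinarith [this, sq_nonneg ‖x (r+1) - x r + eta • (g' (x r) - g' m)‖,
      mul_nonneg (le_of_lt hcpos) (sq_nonneg ‖g' (x r) - g' m‖)]
  have hbdd : BddBelow (Set.range a) := ⟨0, by rintro _ ⟨r, rfl⟩; positivity⟩
  have hal : Tendsto a atTop (𝓝 (⨅ r, a r)) := tendsto_atTop_ciInf ha_anti hbdd
  have hsucc : Tendsto (fun r => a (r+1)) atTop (𝓝 (⨅ r, a r)) := by
    have := hal.comp (tendsto_add_atTop_nat 1)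
    simpa [Function.comp_def] using this
  have hdiff0 : Tendsto (fun r => a r - a (r+1)) atTop (𝓝 0) := by
    simpa using hal.sub hsucc
  have hΔ0 : Tendsto (fun r => g' (x r) - g' m) atTop (𝓝 0) := by
    apply sq_norm_tendsto
    apply squeeze_zero (fun r => sq_nonneg _) (g := fun r => (a r - a (r+1))/c)
    · intro r
      have := M m hmtop hm r
      rw [le_div_iff₀ hcpos]
      simp only [ha]
      nlinarith [this, sq_nonneg ‖x (r+1) - x r + eta • (g' (x r) - g' m)‖,
        sq_nonneg ‖x (r+1) - m‖]
    · simpa using hdiff0.div_const c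
  have hw0 : Tendsto (fun r => x (r+1) - x r + eta • (g' (x r) - g' m)) atTop (𝓝 0) := by
    apply sq_norm_tendsto
    apply squeeze_zero (fun r => sq_nonneg _) (g := fun r => a r - a (r+1))
    · intro r
      have := M m hmtop hm r
      simp only [ha]
      nlinarith [this, sq_nonneg ‖x (r+1) - m‖,
        mul_nonneg (le_of_lt hcpos) (sq_nonneg ‖g' (x r) - g' m‖)]
    · exact hdiff0
  have hstep : Tendsto (fun r => x (r+1) - x r) atTop (𝓝 0) := by
    have := hw0.sub (hΔ0.const_smul eta)
    simpa using this
  -- boundedness and convergent subsequence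
  have hmem : ∀ r, x r ∈ Metric.closedBall m (Real.sqrt (a 0)) := by
    intro r
    rw [Metric.mem_closedBall, dist_eq_norm]
    have h1 : ‖x r - m‖ = Real.sqrt (a r) := by
      rw [ha]; exact (Real.sqrt_sq (norm_nonneg _)).symm
    rw [h1]
    exact Real.sqrt_le_sqrt (ha_anti (Nat.zero_le r))
  obtain ⟨z, -, φ, hφ, hxφ⟩ :=
    tendsto_subseq_of_bounded Metric.isBounded_closedBall hmem
  have hx1 : Tendsto (fun k => x (φ k + 1)) atTop (𝓝 z) := by
    have h2 := hstep.comp hφ.tendsto_atTop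
    have h3 := hxφ.add h2
    simpa [Function.comp] using h3
  have hg'cont : Continuous g' := by
    refine LipschitzWith.continuous (K := L.toNNReal) ?_
    refine LipschitzWith.of_dist_le_mul ?_
    intro a b
    rw [dist_eq_norm, dist_eq_norm, Real.coe_toNNReal L hL0]
    exact hLip a b
  have hg'm : Tendsto (fun r => g' (x r)) atTop (𝓝 (g' m)) := by
    have := hΔ0.add (tendsto_const_nhds (x := g' m))
    simpa using this
  have hgm : g' z = g' m := by
    have h1 : Tendsto (fun k => g' (x (φ k))) atTop (𝓝 (g' z)) :=
      (hg'cont.continuousAt.tendsto).comp hxφ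
    have h2 : Tendsto (fun k => g' (x (φ k))) atTop (𝓝 (g' m)) :=
      hg'm.comp hφ.tendsto_atTop
    exact tendsto_nhds_unique h1 h2
  have huk : Tendsto (fun k => (x (φ k) - eta • g' (x (φ k))) - x (φ k + 1)) atTop
      (𝓝 (-(eta • g' m))) := by
    have h1 : Tendsto (fun k => g' (x (φ k))) atTop (𝓝 (g' m)) :=
      hg'm.comp hφ.tendsto_atTop
    have h2 := (hxφ.sub (h1.const_smul eta)).sub hx1
    have e : z - eta • g' m - z = -(eta • g' m) := by abel
    rwa [e] at h2
  -- the limit point satisfies the VI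
  have hzVI : ∀ w : Euc d, h w ≠ ⊤ →
      h z ≤ (((h w).toReal + ⟪g' m, w - z⟫ : ℝ) : EReal) := by
    intro w hw
    by_contra hlt
    have hlt' : (((h w).toReal + ⟪g' m, w - z⟫ : ℝ) : EReal) < h z := lt_of_not_ge hlt
    obtain ⟨cc, hc1, hc2⟩ := EReal.exists_between_coe_real hlt'
    have hev : ∀ᶠ y in 𝓝 z, (cc : EReal) < h y := hlsc z (cc : EReal) hc2
    have hev2 : ∀ᶠ k in atTop, (cc : EReal) < h (x (φ k + 1)) := hx1.eventually hev
    have hbound : ∀ᶠ k in atTop,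
        eta * cc ≤ eta * (h w).toReal
          - ⟪(x (φ k) - eta • g' (x (φ k))) - x (φ k + 1), w - x (φ k + 1)⟫ := by
      filter_upwards [hev2] with k hk
      have hPk : cc < (h (x (φ k + 1))).toReal := by
        have := hk
        rw [(EReal.coe_toReal (hxtop (φ k)) (hbot _)).symm] at this
        exact_mod_cast this
      have hVI := prox_VI hbot hconv heta0 (hxtop (φ k)) (hiter (φ k)) hw
      nlinarith [hVI, hPk, heta0]
    have htendsto : Tendsto (fun k =>
        eta * (h w).toReal
          - ⟪(x (φ k) - eta • g' (x (φ k))) - x (φ k + 1), w - x (φ k + 1)⟫) atTop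
        (𝓝 (eta * (h w).toReal - ⟪-(eta • g' m), w - z⟫)) := by
      exact tendsto_const_nhds.sub (huk.inner (tendsto_const_nhds.sub hx1))
    have hfin : eta * cc ≤ eta * (h w).toReal - ⟪-(eta • g' m), w - z⟫ :=
      ge_of_tendsto htendsto hbound
    rw [inner_neg_left, real_inner_smul_left] at hfin
    have hc1' : (h w).toReal + ⟪g' m, w - z⟫ < cc := by exact_mod_cast hc1
    nlinarith [hfin, hc1', heta0]
  have hztop : h z ≠ ⊤ :=
    ne_top_of_le_ne_top (EReal.coe_ne_top _) (hzVI m hmtop)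
  have hzmin : ∀ y, ((g z : ℝ) : EReal) + h z ≤ ((g y : ℝ) : EReal) + h y := by
    intro y
    by_cases hy : h y = ⊤
    · rw [hy, EReal.add_top_of_ne_bot (EReal.coe_ne_bot _)]
      exact le_top
    · have hVI := hzVI y hy
      rw [(EReal.coe_toReal hztop (hbot z)).symm] at hVI
      have hZY : (h z).toReal ≤ (h y).toReal + ⟪g' m, y - z⟫ := by exact_mod_cast hVI
      have hcl := convex_lb hgconv hgrad z y
      rw [hgm] at hcl
      rw [(EReal.coe_toReal hztop (hbot z)).symm, (EReal.coe_toReal hy (hbot y)).symm]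
      have : g z + (h z).toReal ≤ g y + (h y).toReal := by linarith [hZY, hcl]
      exact_mod_cast this
  -- conclude convergence to z
  set a' : ℕ → ℝ := fun r => ‖x r - z‖^2 with ha'
  have ha'_anti : Antitone a' := by
    refine antitone_nat_of_succ_le ?_
    intro r
    have := M z hztop hzmin r
    simp only [ha']
    nlinarith [this, sq_nonneg ‖x (r+1) - x r + eta • (g' (x r) - g' z)‖,
      mul_nonneg (le_of_lt hcpos) (sq_nonneg ‖g' (x r) - g' z‖)]
  have hbdd' : BddBelow (Set.range a') := ⟨0, by rintro _ ⟨r, rfl⟩; positivity⟩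
  have hal' : Tendsto a' atTop (𝓝 (⨅ r, a' r)) := tendsto_atTop_ciInf ha'_anti hbdd'
  have hsub0 : Tendsto (fun k => a' (φ k)) atTop (𝓝 0) := by
    have h0 : Tendsto (fun k => x (φ k) - z) atTop (𝓝 0) := by
      simpa using hxφ.sub (tendsto_const_nhds (x := z))
    have h1 : Tendsto (fun k => ‖x (φ k) - z‖) atTop (𝓝 0) := by
      rw [← tendsto_zero_iff_norm_tendsto_zero]
      exact h0
    have := h1.pow 2
    simpa [ha'] using this
  have hinf0 : (⨅ r, a' r) = 0 :=
    tendsto_nhds_unique (hal'.comp hφ.tendsto_atTop) hsub0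
  rw [hinf0] at hal'
  have hxz : Tendsto (fun r => x r - z) atTop (𝓝 0) := sq_norm_tendsto hal'
  refine ⟨z, hzmin, ?_⟩
  have := hxz.add (tendsto_const_nhds (x := z))
  simpa using this
end
end

section
/- Fast proximal gradient (FISTA-type) rate: let g : ℝ^d → ℝ be convex with L-Lipschitz gradient, h ∈ Γ₀(ℝ^d), f = g + h with minimizer x̂, η ∈ (0, 1/L), θ_r = 2/(r+2). Define x⁰ = z⁰, and for r ≥ 0: y^r = (1−θ_r)x^r + θ_r z^r, x^{r+1} = prox_{ηh}(y^r − η∇g(y^r)), z^{r+1} = x^r + (1/θ_r)(x^{r+1} − x^r). Then f(x^{r+1}) − f(x̂) ≤ 2‖x⁰ − x̂‖² / (η (r+2)²). -/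
open scoped RealInnerProductSpace


noncomputable section

lemma norm_combo_sq {d : ℕ} (v a b : Euc d) (t : ℝ) :
    ‖v - ((1-t)•a + t•b)‖^2 = (1-t)*‖v-a‖^2 + t*‖v-b‖^2 - t*(1-t)*‖a-b‖^2 := by
  have key : v - ((1-t)•a + t•b) = (1-t)•(v-a) + t•(v-b) := by
    simp [smul_sub, sub_smul]; abel
  have e1 : ‖(1-t)•(v-a) + t•(v-b)‖^2
      = ⟪(1-t)•(v-a), (1-t)•(v-a)⟫ + 2*⟪(1-t)•(v-a), t•(v-b)⟫ + ⟪t•(v-b), t•(v-b)⟫ := by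
    rw [← real_inner_self_eq_norm_sq, real_inner_add_add_self]
  have e2 : ‖a - b‖^2 = ‖v-a‖^2 - 2*⟪v-a,v-b⟫ + ‖v-b‖^2 := by
    have h : a - b = (v-b) - (v-a) := by abel
    rw [h, ← real_inner_self_eq_norm_sq, real_inner_sub_sub_self,
      real_inner_self_eq_norm_sq, real_inner_self_eq_norm_sq, real_inner_comm]
    ring
  rw [key, e1, e2, real_inner_smul_left, real_inner_smul_left, real_inner_smul_left,
    real_inner_smul_right, real_inner_smul_right, real_inner_smul_right,
    real_inner_self_eq_norm_sq, real_inner_self_eq_norm_sq]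
  ring

-- L2: take t → 0
lemma le_sub_of_forall {A B c : ℝ} (hc : 0 ≤ c)
    (H : ∀ t : ℝ, 0 < t → t ≤ 1 → A ≤ B - (1-t)*c) : A ≤ B - c := by
  rcases eq_or_lt_of_le hc with hc0 | hc0
  · simpa [← hc0] using H 1 one_pos le_rfl
  by_contra hlt
  push_neg at hlt
  set ε := A - (B - c) with hε
  have hε0 : 0 < ε := by simp [hε]; linarith
  have ht0 : 0 < min 1 (ε/(2*c)) := lt_min one_pos (by positivity)
  have := H _ ht0 (min_le_left _ _)
  have h2 : min 1 (ε/(2*c)) * c ≤ ε/2 := by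
    calc min 1 (ε/(2*c)) * c ≤ (ε/(2*c)) * c := by
          apply mul_le_mul_of_nonneg_right (min_le_right _ _) hc
      _ = ε/2 := by field_simp
  nlinarith

-- L4: gradient inequality for convex g
lemma convex_grad_ineq {d : ℕ} {g : Euc d → ℝ} {g' : Euc d → Euc d}
    (hgconv : ConvexOn ℝ Set.univ g) (hgrad : ∀ w, HasGradientAt g (g' w) w)
    (a b : Euc d) : g a + ⟪g' a, b - a⟫ ≤ g b := by
  set φ : ℝ → ℝ := fun t => g (a + t • (b - a)) with hφ
  have hd : HasDerivAt φ ⟪g' a, b - a⟫ 0 := by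
    have h1 : HasDerivAt (fun t : ℝ => a + t • (b - a)) (b - a) 0 := by
      simpa using ((hasDerivAt_id (0:ℝ)).smul_const (b - a)).const_add a
    have h2 := (hgrad (a + (0:ℝ) • (b - a))).hasFDerivAt.comp_hasDerivAt 0 h1
    simpa [InnerProductSpace.toDual_apply_apply, Function.comp_def] using h2
  have slope_le : ∀ t : ℝ, 0 < t → t ≤ 1 → (φ t - φ 0)/t ≤ g b - g a := by
    intro t ht0 ht1
    have := hgconv.2 (Set.mem_univ b) (Set.mem_univ a) ht0.le (by linarith : (0:ℝ) ≤ 1 - t)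
      (by ring : t + (1 - t) = 1)
    have he : t • b + (1-t) • a = a + t • (b - a) := by
      simp [smul_sub, sub_smul]; abel
    rw [he] at this
    have hφt : φ t ≤ t * g b + (1-t) * g a := by simpa [smul_eq_mul] using this
    have hφ0 : φ 0 = g a := by simp [hφ]
    rw [div_le_iff₀ ht0, hφ0]
    nlinarith
  have htend : Filter.Tendsto (fun t => (φ t - φ 0)/t) (nhdsWithin 0 (Set.Ioi 0)) (nhds ⟪g' a, b - a⟫) := by
    have := hd.hasDerivWithinAt (s := Set.Ioi (0:ℝ))
    rw [hasDerivWithinAt_iff_tendsto_slope] at this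
    have hsub : nhdsWithin (0:ℝ) (Set.Ioi 0 \ {0}) = nhdsWithin 0 (Set.Ioi 0) := by
      congr 1; ext u; simp
    rw [hsub] at this
    refine this.congr' ?_
    filter_upwards [self_mem_nhdsWithin] with u hu
    simp [slope_def_field, div_eq_inv_mul]
  have : ⟪g' a, b - a⟫ ≤ g b - g a := by
    refine le_of_tendsto htend ?_
    filter_upwards [self_mem_nhdsWithin, Ioc_mem_nhdsGT_of_mem (Set.mem_Ico.2 ⟨le_rfl, one_pos⟩)] with u hu hu2
    exact slope_le u hu hu2.2
  linarith

-- L3: descent lemma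
lemma descent_lemma {d : ℕ} {g : Euc d → ℝ} {g' : Euc d → Euc d} {L : ℝ}
    (hgrad : ∀ w, HasGradientAt g (g' w) w)
    (hLip : ∀ w w', ‖g' w - g' w'‖ ≤ L * ‖w - w'‖)
    (a b : Euc d) : g b ≤ g a + ⟪g' a, b - a⟫ + L/2 * ‖b - a‖^2 := by
  set v := b - a with hv
  set ψ : ℝ → ℝ := fun t => g (a + t • v) - t * ⟪g' a, v⟫ - L * ‖v‖^2 / 2 * t^2 with hψ
  have hder : ∀ t : ℝ, HasDerivAt ψ (⟪g' (a + t • v), v⟫ - ⟪g' a, v⟫ - L * ‖v‖^2 * t) t := by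
    intro t
    have h1 : HasDerivAt (fun s : ℝ => a + s • v) v t := by
      simpa using ((hasDerivAt_id t).smul_const v).const_add a
    have h2 : HasDerivAt (fun s : ℝ => g (a + s • v)) ⟪g' (a + t • v), v⟫ t := by
      simpa [InnerProductSpace.toDual_apply_apply, Function.comp_def] using
        (hgrad (a + t • v)).hasFDerivAt.comp_hasDerivAt t h1
    have h3 : HasDerivAt (fun s : ℝ => s * ⟪g' a, v⟫) ⟪g' a, v⟫ t := by
      simpa using (hasDerivAt_id t).mul_const ⟪g' a, v⟫
    have h4 : HasDerivAt (fun s : ℝ => L * ‖v‖^2 / 2 * s^2) (L * ‖v‖^2 * t) t := by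
      have := (hasDerivAt_pow 2 t).const_mul (L * ‖v‖^2 / 2)
      simpa using this.congr_deriv (by ring)
    exact (h2.sub h3).sub h4
  have hψ' : ∀ t, deriv ψ t = ⟪g' (a + t • v), v⟫ - ⟪g' a, v⟫ - L * ‖v‖^2 * t :=
    fun t => (hder t).deriv
  have hanti : AntitoneOn ψ (Set.Icc 0 1) := by
    apply antitoneOn_of_deriv_nonpos (convex_Icc 0 1)
    · exact fun t _ => (hder t).continuousAt.continuousWithinAt
    · exact fun t _ => ((hder t).differentiableAt).differentiableWithinAt
    · intro t ht
      rw [interior_Icc, Set.mem_Ioo] at ht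
      rw [hψ']
      have h5 : ⟪g' (a + t • v) - g' a, v⟫ ≤ L * ‖v‖^2 * t := by
        calc ⟪g' (a + t • v) - g' a, v⟫ ≤ ‖g' (a + t • v) - g' a‖ * ‖v‖ :=
              real_inner_le_norm _ _
          _ ≤ (L * ‖a + t • v - a‖) * ‖v‖ := by
              apply mul_le_mul_of_nonneg_right (hLip _ _) (norm_nonneg _)
          _ = L * ‖v‖^2 * t := by
              simp [norm_smul, abs_of_pos ht.1]; ring
      rw [inner_sub_left] at h5
      linarith
  have := hanti (Set.mem_Icc.2 ⟨le_rfl, zero_le_one⟩) (Set.mem_Icc.2 ⟨zero_le_one, le_rfl⟩) zero_le_one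
  have hψ1 : ψ 1 = g b - ⟪g' a, v⟫ - L * ‖v‖^2 / 2 := by simp [hψ, hv]
  have hψ0 : ψ 0 = g a := by simp [hψ]
  rw [hψ1, hψ0] at this
  linarith [this]

lemma prox_ne_top {d : ℕ} {h : Euc d → EReal} {eta : ℝ} {v xp : Euc d}
    (hmin : ∀ w, proxObj h eta v xp ≤ proxObj h eta v w)
    {w0 : Euc d} (hw0 : h w0 ≠ ⊤) : h xp ≠ ⊤ := by
  intro htop
  have h1 := hmin w0
  rw [proxObj, proxObj, htop] at h1
  rw [EReal.coe_add_top] at h1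
  have h3 : ((1 / (2 * eta) * ‖v - w0‖ ^ 2 : ℝ) : EReal) + h w0 < ⊤ :=
    EReal.add_lt_top (EReal.coe_ne_top _) hw0
  exact not_lt_of_ge h1 h3

lemma prox_strong {d : ℕ} {h : Euc d → EReal} (hbot : ∀ u, h u ≠ ⊥) (hconv : ConvexF h)
    {eta : ℝ} (heta : 0 < eta) (v xp : Euc d)
    (hmin : ∀ w, proxObj h eta v xp ≤ proxObj h eta v w)
    (hxp : h xp ≠ ⊤) (w : Euc d) (hw : h w ≠ ⊤) :
    1/(2*eta)*‖v-xp‖^2 + (h xp).toReal + 1/(2*eta)*‖w-xp‖^2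
      ≤ 1/(2*eta)*‖v-w‖^2 + (h w).toReal := by
  obtain ⟨Hxp, hxpe⟩ : ∃ r : ℝ, h xp = (r : EReal) :=
    ⟨(h xp).toReal, (EReal.coe_toReal hxp (hbot xp)).symm⟩
  obtain ⟨Hw, hwe⟩ : ∃ r : ℝ, h w = (r : EReal) :=
    ⟨(h w).toReal, (EReal.coe_toReal hw (hbot w)).symm⟩
  rw [hxpe, hwe, EReal.toReal_coe, EReal.toReal_coe]
  set c := 1/(2*eta) with hc
  have hc0 : 0 < c := by positivity
  have key : ∀ t : ℝ, 0 < t → t ≤ 1 →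
      c*‖v-xp‖^2 + Hxp ≤ (c*‖v-w‖^2 + Hw) - (1-t)*(c*‖xp-w‖^2) := by
    intro t ht0 ht1
    set u := (1-t)•xp + t•w with hu
    have hcv := hconv w xp t ht0.le ht1
    have hueq : t • w + (1 - t) • xp = u := by rw [hu]; abel
    rw [hueq, hxpe, hwe] at hcv
    have hcv2 : h u ≤ ((t * Hw + (1-t) * Hxp : ℝ) : EReal) := by
      calc h u ≤ (t : EReal) * (Hw:EReal) + ((1-t : ℝ) : EReal) * (Hxp:EReal) := hcv
        _ = ((t * Hw + (1-t) * Hxp : ℝ) : EReal) := by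
            rw [← EReal.coe_mul, ← EReal.coe_mul, ← EReal.coe_add]
    have h1 := hmin u
    rw [proxObj, proxObj, hxpe] at h1
    have h3 : ((c*‖v-xp‖^2 + Hxp : ℝ) : EReal)
        ≤ ((c*‖v-u‖^2 + (t * Hw + (1-t) * Hxp) : ℝ) : EReal) := by
      calc ((c*‖v-xp‖^2 + Hxp : ℝ) : EReal)
          = ((c*‖v-xp‖^2 : ℝ) : EReal) + (Hxp : EReal) := by rw [EReal.coe_add]
        _ ≤ ((c*‖v-u‖^2 : ℝ) : EReal) + h u := h1
        _ ≤ ((c*‖v-u‖^2 : ℝ) : EReal) + ((t * Hw + (1-t) * Hxp : ℝ) : EReal) :=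
            add_le_add_right hcv2 _
        _ = _ := by rw [← EReal.coe_add]
    have h4 : c*‖v-xp‖^2 + Hxp ≤ c*‖v-u‖^2 + (t * Hw + (1-t) * Hxp) := by
      exact_mod_cast h3
    have h5 : ‖v-u‖^2 = (1-t)*‖v-xp‖^2 + t*‖v-w‖^2 - t*(1-t)*‖xp-w‖^2 :=
      norm_combo_sq v xp w t
    rw [h5] at h4
    have h6 : t * (c*‖v-xp‖^2 + Hxp)
        ≤ t * (c*‖v-w‖^2 + Hw) - t*((1-t)*(c*‖xp-w‖^2)) := by nlinarith
    nlinarith [h6, ht0]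
  have := le_sub_of_forall (by positivity) key
  have hnr : ‖w - xp‖ = ‖xp - w‖ := norm_sub_rev _ _
  rw [hnr]
  linarith

lemma expand_quad {d : ℕ} {eta : ℝ} (heta : 0 < eta) (y u gy : Euc d) :
    1/(2*eta)*‖(y - eta•gy) - u‖^2
      = 1/(2*eta)*‖u - y‖^2 + ⟪gy, u - y⟫ + eta/2*‖gy‖^2 := by
  have he : (y - eta•gy) - u = (y - u) - eta•gy := by abel
  rw [he, norm_sub_sq_real, real_inner_smul_right, norm_smul]
  have h1 : ‖u - y‖ = ‖y - u‖ := norm_sub_rev _ _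
  have h2 : ⟪gy, u - y⟫ = - ⟪y - u, gy⟫ := by
    rw [real_inner_comm, ← inner_neg_left]; congr 1; abel
  rw [h1, h2]
  rw [Real.norm_eq_abs, abs_of_pos heta]
  field_simp
  ring

lemma three_point {d : ℕ} {g : Euc d → ℝ} {g' : Euc d → Euc d} {L : ℝ} (hL0 : 0 ≤ L)
    (hgconv : ConvexOn ℝ Set.univ g)
    (hgrad : ∀ w, HasGradientAt g (g' w) w)
    (hLip : ∀ w w', ‖g' w - g' w'‖ ≤ L * ‖w - w'‖)
    {h : Euc d → EReal} (hbot : ∀ u, h u ≠ ⊥) (hconv : ConvexF h)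
    {eta : ℝ} (heta0 : 0 < eta) (hetaL : eta < 1/L)
    (y xp : Euc d)
    (hmin : ∀ w, proxObj h eta (y - eta • g' y) xp ≤ proxObj h eta (y - eta • g' y) w)
    (hxp : h xp ≠ ⊤) (w : Euc d) (hw : h w ≠ ⊤) :
    g xp + (h xp).toReal ≤ g w + (h w).toReal + 1/(2*eta)*(‖w-y‖^2 - ‖w-xp‖^2) := by
  set c := 1/(2*eta) with hc
  have hLeta : L * eta ≤ 1 := by
    rcases eq_or_lt_of_le hL0 with h0 | h0
    · rw [← h0]; norm_num
    · have h1 : L * eta < L * (1/L) := mul_lt_mul_of_pos_left hetaL h0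
      rw [mul_one_div, div_self (ne_of_gt h0)] at h1
      exact h1.le
  have hdes := descent_lemma hgrad hLip y xp
  have hcvx := convex_grad_ineq hgconv hgrad y w
  have hps := prox_strong hbot hconv heta0 (y - eta • g' y) xp hmin hxp w hw
  rw [expand_quad heta0 y xp (g' y), expand_quad heta0 y w (g' y)] at hps
  have hdes2 : g xp ≤ g y + ⟪g' y, xp - y⟫ + c * ‖xp - y‖^2 := by
    have : L/2 * ‖xp - y‖^2 ≤ c * ‖xp - y‖^2 := by
      apply mul_le_mul_of_nonneg_right _ (sq_nonneg _)
      rw [hc, div_le_div_iff₀ (by norm_num) (by positivity)]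
      nlinarith [hLeta, heta0]
    linarith
  have hn1 : ‖w - xp‖ = ‖xp - w‖ := norm_sub_rev _ _
  have hn2 : ‖xp - y‖ = ‖y - xp‖ := norm_sub_rev _ _
  have hn3 : ‖w - y‖ = ‖y - w‖ := norm_sub_rev _ _
  nlinarith [hps, hdes2, hcvx, sq_nonneg ‖w - xp‖]

set_option maxHeartbeats 2000000 in
/-- `O(1/r²)` rate of the fast proximal gradient (FISTA-type) algorithm
with `θ_r = 2/(r+2)` and step size `η ∈ (0, 1/L)`:
`f(x^{r+1}) - f(x̂) ≤ 2‖x⁰ - x̂‖²/(η(r+2)²)` where `f = g + h`. -/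
theorem fast_proximal_gradient_rate {d : ℕ}
    (g : Euc d → ℝ) (g' : Euc d → Euc d) (L : ℝ) (hL0 : 0 ≤ L)
    (hgconv : ConvexOn ℝ Set.univ g)
    (hgrad : ∀ w, HasGradientAt g (g' w) w)
    (hLip : ∀ w w', ‖g' w - g' w'‖ ≤ L * ‖w - w'‖)
    (h : Euc d → EReal) (hh : Gamma0 h)
    (eta : ℝ) (heta0 : 0 < eta) (heta1 : eta < 1 / L)
    (xhat : Euc d)
    (hxhat : ∀ w, ((g xhat : ℝ) : EReal) + h xhat ≤ ((g w : ℝ) : EReal) + h w)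
    (x y z : ℕ → Euc d) (hx0 : x 0 = z 0)
    (hy : ∀ r : ℕ, y r = (1 - 2 / ((r : ℝ) + 2)) • x r + (2 / ((r : ℝ) + 2)) • z r)
    (hx : ∀ r : ℕ, ∀ w : Euc d,
      proxObj h eta (y r - eta • g' (y r)) (x (r + 1)) ≤
        proxObj h eta (y r - eta • g' (y r)) w)
    (hz : ∀ r : ℕ, z (r + 1) = x r + (1 / (2 / ((r : ℝ) + 2))) • (x (r + 1) - x r)) :
    ∀ r : ℕ, ((g (x (r + 1)) : ℝ) : EReal) + h (x (r + 1)) ≤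
      (((g xhat : ℝ) : EReal) + h xhat) +
        ((2 * ‖x 0 - xhat‖ ^ 2 / (eta * ((r : ℝ) + 2) ^ 2) : ℝ) : EReal) := by
  obtain ⟨⟨hbot, w0, hw0⟩, hconv, _⟩ := hh
  have hxtop : ∀ r : ℕ, h (x (r+1)) ≠ ⊤ := fun r => prox_ne_top (hx r) hw0
  have hhattop : h xhat ≠ ⊤ := by
    intro htop
    have h1 := hxhat w0
    rw [htop, EReal.coe_add_top] at h1
    exact not_lt_of_ge h1 (EReal.add_lt_top (EReal.coe_ne_top _) hw0)
  set Hhat := (h xhat).toReal with hHhat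
  set fhat := g xhat + Hhat with hfhat
  have hopt : ∀ w, h w ≠ ⊤ → fhat ≤ g w + (h w).toReal := by
    intro w hw
    have h1 := hxhat w
    rw [← EReal.coe_toReal hhattop (hbot xhat),
      ← EReal.coe_toReal hw (hbot w), ← EReal.coe_add, ← EReal.coe_add] at h1
    exact_mod_cast h1
  have T6 : ∀ r : ℕ, ∀ w : Euc d, h w ≠ ⊤ →
      g (x (r+1)) + (h (x (r+1))).toReal
        ≤ g w + (h w).toReal + 1/(2*eta)*(‖w - y r‖^2 - ‖w - x (r+1)‖^2) :=
    fun r w hw => three_point hL0 hgconv hgrad hLip hbot hconv heta0 heta1 (y r) (x (r+1))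
      (hx r) (hxtop r) w hw
  have key : ∀ r : ℕ, (g (x (r+1)) + (h (x (r+1))).toReal - fhat) * (((r:ℝ)+2)^2/4)
      + 1/(2*eta)*‖xhat - z (r+1)‖^2 ≤ 1/(2*eta)*‖xhat - z 0‖^2 := by
    intro r
    induction r with
    | zero =>
      have t6 := T6 0 xhat hhattop
      have hy0 : y 0 = z 0 := by
        rw [hy 0]; norm_num
      have hz1 : z 1 = x 1 := by
        rw [hz 0]; norm_num
      rw [hy0] at t6
      rw [hz1]
      norm_num at t6 ⊢
      linarith
    | succ r ih =>
      set n := (r:ℝ) with hn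
      have hn0 : 0 ≤ n := Nat.cast_nonneg r
      set θ := 2/(n+3) with hθ
      have hθ0 : 0 < θ := by positivity
      have hθ1 : θ ≤ 1 := by rw [hθ, div_le_one (by linarith)]; linarith
      set w := (1-θ) • x (r+1) + θ • xhat with hwdef
      have hcast : ((r+1:ℕ):ℝ) + 2 = n + 3 := by push_cast; ring
      -- convexity of h
      have hcv := hconv xhat (x (r+1)) θ hθ0.le hθ1
      have weq : θ • xhat + (1 - θ) • x (r+1) = w := by rw [hwdef]; abel
      rw [weq, ← EReal.coe_toReal hhattop (hbot xhat),
        ← EReal.coe_toReal (hxtop r) (hbot _)] at hcv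
      have hcv2 : h w ≤ ((θ * (h xhat).toReal + (1-θ) * (h (x (r+1))).toReal : ℝ) : EReal) := by
        calc h w ≤ _ := hcv
          _ = _ := by rw [← EReal.coe_mul, ← EReal.coe_mul, ← EReal.coe_add]
      have hwtop : h w ≠ ⊤ := ne_top_of_le_ne_top (EReal.coe_ne_top _) hcv2
      have hwle : (h w).toReal ≤ θ * Hhat + (1-θ) * (h (x (r+1))).toReal := by
        have := EReal.toReal_le_toReal hcv2 (hbot w) (EReal.coe_ne_top _)
        rwa [EReal.toReal_coe] at this
      have hgw : g w ≤ (1-θ) * g (x (r+1)) + θ * g xhat :=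
        hgconv.2 (Set.mem_univ _) (Set.mem_univ _) (by linarith) hθ0.le (by ring)
      have t6 := T6 (r+1) w hwtop
      -- vector identities
      have hyr : y (r+1) = (1-θ) • x (r+1) + θ • z (r+1) := by
        rw [hy (r+1), hcast]
      have A1 : w - y (r+1) = θ • (xhat - z (r+1)) := by
        rw [hyr, hwdef]; module
      have hsmul : θ • ((1/θ) • (x (r+2) - x (r+1))) = x (r+2) - x (r+1) := by
        rw [smul_smul, mul_one_div, div_self (ne_of_gt hθ0), one_smul]
      have A2 : w - x (r+2) = θ • (xhat - z (r+2)) := by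
        rw [hz (r+1), hcast, hwdef, smul_sub, smul_add, hsmul, sub_smul, one_smul]
        abel
      have hns : ∀ u : Euc d, ‖θ • u‖^2 = θ^2 * ‖u‖^2 := fun u => by
        rw [norm_smul, Real.norm_eq_abs, mul_pow, sq_abs]
      rw [A1, A2, hns, hns] at t6
      -- real arithmetic
      have hD1 : 0 ≤ g (x (r+1)) + (h (x (r+1))).toReal - fhat := by
        have := hopt (x (r+1)) (hxtop r)
        linarith
      set D1 := g (x (r+1)) + (h (x (r+1))).toReal - fhat with hD1def
      set D2 := g (x (r+2)) + (h (x (r+2))).toReal - fhat with hD2def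
      set N1 := ‖xhat - z (r+1)‖^2 with hN1
      set N2 := ‖xhat - z (r+2)‖^2 with hN2
      have step : D2 ≤ (1-θ) * D1 + 1/(2*eta) * (θ^2*N1 - θ^2*N2) := by
        rw [hD2def, hD1def, hfhat]
        linarith [t6, hwle, hgw]
      have hM : (0:ℝ) < (n+3)^2/4 := by positivity
      have step2 := mul_le_mul_of_nonneg_left step hM.le
      have e1 : (n+3)^2/4 * (1/(2*eta) * (θ^2*N1 - θ^2*N2))
          = 1/(2*eta)*N1 - 1/(2*eta)*N2 := by
        rw [hθ]; field_simp; ring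
      have e2 : (n+3)^2/4 * ((1-θ) * D1) = D1 * ((n+1)*(n+3))/4 := by
        rw [hθ]; field_simp; ring
      have e3 : D1 * ((n+1)*(n+3))/4 ≤ D1 * ((n+2)^2)/4 := by nlinarith
      rw [hcast]
      have ihb : D1 * ((n+2)^2/4) + 1/(2*eta)*N1 ≤ 1/(2*eta)*‖xhat - z 0‖^2 := ih
      calc D2 * ((n+3)^2/4) + 1/(2*eta)*N2
          ≤ (n+3)^2/4 * ((1-θ) * D1) + (1/(2*eta)*N1 - 1/(2*eta)*N2) + 1/(2*eta)*N2 := by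
            rw [← e1]; linarith [step2]
        _ = D1 * ((n+1)*(n+3))/4 + 1/(2*eta)*N1 := by rw [e2]; ring
        _ ≤ D1 * ((n+2)^2)/4 + 1/(2*eta)*N1 := by linarith
        _ ≤ 1/(2*eta)*‖xhat - z 0‖^2 := by linarith [ihb]
  intro r
  have hk := key r
  have hb : (0:ℝ) ≤ 1/(2*eta)*‖xhat - z (r+1)‖^2 := by positivity
  have hr2 : (0:ℝ) < ((r:ℝ)+2)^2/4 := by positivity
  rw [← hx0] at hk
  have hnn : ‖xhat - x 0‖ = ‖x 0 - xhat‖ := norm_sub_rev _ _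
  rw [hnn] at hk
  have h1 : (g (x (r+1)) + (h (x (r+1))).toReal - fhat)
      ≤ 1/(2*eta)*‖x 0 - xhat‖^2 / (((r:ℝ)+2)^2/4) := by
    rw [le_div_iff₀ hr2]; linarith
  have heq : 1/(2*eta)*‖x 0 - xhat‖^2 / (((r:ℝ)+2)^2/4)
      = 2 * ‖x 0 - xhat‖^2 / (eta * ((r:ℝ)+2)^2) := by
    field_simp; ring
  rw [heq] at h1
  have h2 : g (x (r+1)) + (h (x (r+1))).toReal
      ≤ fhat + 2 * ‖x 0 - xhat‖^2 / (eta * ((r:ℝ)+2)^2) := by linarith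
  calc ((g (x (r+1)) : ℝ) : EReal) + h (x (r+1))
      = ((g (x (r+1)) + (h (x (r+1))).toReal : ℝ) : EReal) := by
        rw [EReal.coe_add, EReal.coe_toReal (hxtop r) (hbot _)]
    _ ≤ ((fhat + 2 * ‖x 0 - xhat‖^2 / (eta * ((r:ℝ)+2)^2) : ℝ) : EReal) :=
        EReal.coe_le_coe_iff.2 h2
    _ = (((g xhat : ℝ) : EReal) + h xhat) +
        ((2 * ‖x 0 - xhat‖ ^ 2 / (eta * ((r : ℝ) + 2) ^ 2) : ℝ) : EReal) := by
        rw [EReal.coe_add, hfhat, EReal.coe_add,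
          EReal.coe_toReal hhattop (hbot xhat)]
end
end
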